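/- Let T ∈ B(H) be expansive satisfying T*²T² - 3T*T + 3I - L_T* L_T - P_{ker T*} ≤ 0, where P_{ker T*} is the orthogonal projection onto ker T* and L_T = (T*T)⁻¹T*. Then T is 3-concave, i.e., β₃(T) = T*³T³ - 3T*²T² + 3T*T - I ≤ 0. -/

import Mathlib

open ContinuousLinearMap
open scoped InnerProductSpace

lemma aux_isUnit_adjoint_mul_self {H : Type*} [NormedAddCommGroup H] [InnerProductSpace ℂ H]
    [CompleteSpace H] (T : H →L[ℂ] H) (hexp : ∀ x : H, ‖x‖ ≤ ‖T x‖) :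
    IsUnit (adjoint T * T) := by
  set S := adjoint T * T with hS
  have hre : ∀ x : H, ‖x‖ * ‖x‖ ≤ RCLike.re (⟪S x, x⟫_ℂ) := by
    intro x
    calc ‖x‖ * ‖x‖ ≤ ‖T x‖ * ‖T x‖ :=
          mul_le_mul (hexp x) (hexp x) (norm_nonneg x) (norm_nonneg _)
      _ = RCLike.re (⟪T x, T x⟫_ℂ) := (inner_self_eq_norm_mul_norm _).symm
      _ = RCLike.re (⟪S x, x⟫_ℂ) := by
          rw [hS, mul_apply_eq_comp, adjoint_inner_left]
  have hbound : ∀ x : H, ‖x‖ ≤ 1 * ‖S x‖ := by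
    intro x
    rcases eq_or_ne x 0 with h | h
    · simp [h]
    · have h1 : ‖x‖ * ‖x‖ ≤ ‖S x‖ * ‖x‖ := by
        calc ‖x‖ * ‖x‖ ≤ RCLike.re (⟪S x, x⟫_ℂ) := hre x
          _ ≤ ‖⟪S x, x⟫_ℂ‖ := RCLike.re_le_norm _
          _ ≤ ‖S x‖ * ‖x‖ := norm_inner_le_norm _ _
      have := le_of_mul_le_mul_right h1 (norm_pos_iff.mpr h)
      linarith
  have hanti : AntilipschitzWith 1 S := AddMonoidHomClass.antilipschitz_of_bound S hbound
  have hinj : LinearMap.ker S = ⊥ := LinearMap.ker_eq_bot.mpr (by exact hanti.injective)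
  have hclosed : IsClosed ((LinearMap.range (S : H →ₗ[ℂ] H) : Submodule ℂ H) : Set H) := by
    rw [LinearMap.coe_range]; exact hanti.isClosed_range S.uniformContinuous
  haveI : CompleteSpace (LinearMap.range (S : H →ₗ[ℂ] H)) := hclosed.completeSpace_coe
  have horth : (LinearMap.range (S : H →ₗ[ℂ] H))ᗮ = ⊥ := by
    rw [Submodule.eq_bot_iff]
    intro w hw
    have h0 : ⟪S w, w⟫_ℂ = 0 := hw (S w) ⟨w, rfl⟩
    have := hre w
    rw [h0] at this
    simp only [map_zero] at this
    have : ‖w‖ = 0 := by nlinarith [norm_nonneg w]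
    simpa using this
  have hrange : LinearMap.range (S : H →ₗ[ℂ] H) = ⊤ := by
    rw [← (LinearMap.range (S : H →ₗ[ℂ] H)).orthogonal_orthogonal, horth, Submodule.bot_orthogonal_eq_top]
  let e := ContinuousLinearEquiv.ofBijective S hinj hrange
  refine ⟨⟨S, (e.symm : H →L[ℂ] H), ?_, ?_⟩, rfl⟩
  · ext x
    have : S ((e.symm : H →L[ℂ] H) x) = e (e.symm x) := rfl
    rw [mul_apply_eq_comp, this, e.apply_symm_apply, one_apply_eq_self]
  · ext x
    have : (e.symm : H →L[ℂ] H) (S x) = e.symm (e x) := rfl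
    rw [mul_apply_eq_comp, this, e.symm_apply_apply, one_apply_eq_self]

/-- The `r`-th defect operator `β_r(T) = Σ_{j=0}^{r} (r choose j)(-1)^{r-j} T*^j T^j`. -/
noncomputable def defectOp {H : Type*} [NormedAddCommGroup H] [InnerProductSpace ℂ H]
    [CompleteSpace H] (r : ℕ) (T : H →L[ℂ] H) : H →L[ℂ] H :=
  ∑ j ∈ Finset.range (r + 1),
    (((-1 : ℂ) ^ (r - j)) * (r.choose j : ℂ)) • ((adjoint T) ^ j * T ^ j)

/-- The canonical left inverse `L_T = (T*T)⁻¹ T*` of a left invertible operator `T`. -/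
noncomputable def leftInv {H : Type*} [NormedAddCommGroup H] [InnerProductSpace ℂ H]
    [CompleteSpace H] (T : H →L[ℂ] H) : H →L[ℂ] H :=
  Ring.inverse (adjoint T * T) * adjoint T

/-- (Shimorin) If `T` is expansive and satisfies
`T*²T² - 3T*T + 3I - L_T* L_T - P_{ker T*} ≤ 0`, where `P_{ker T*}` is the orthogonal
projection onto `ker T*` and `L_T = (T*T)⁻¹T*`, then `T` is 3-concave:
`β₃(T) = T*³T³ - 3T*²T² + 3T*T - I ≤ 0`. -/
theorem shimorin_three_concave {H : Type*} [NormedAddCommGroup H]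
    [InnerProductSpace ℂ H] [CompleteSpace H] (T : H →L[ℂ] H)
    (hexp : ∀ x : H, ‖x‖ ≤ ‖T x‖)
    (P : H →L[ℂ] H) (hP1 : P * P = P) (hP2 : IsSelfAdjoint P)
    (hP3 : LinearMap.range (P : H →ₗ[ℂ] H) = LinearMap.ker ((adjoint T : H →L[ℂ] H) : H →ₗ[ℂ] H))
    (hineq : (-((adjoint T) ^ 2 * T ^ 2 - (3 : ℂ) • (adjoint T * T)
        + (3 : ℂ) • (1 : H →L[ℂ] H) - adjoint (leftInv T) * leftInv T - P)).IsPositive) :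
    (-(defectOp 3 T)).IsPositive := by
  have hU : IsUnit (adjoint T * T) := aux_isUnit_adjoint_mul_self T hexp
  have hLT : leftInv T * T = 1 := by
    rw [leftInv, mul_assoc, Ring.inverse_mul_cancel _ hU]
  have hTL : adjoint T * adjoint (leftInv T) = 1 := by
    have h := congrArg star hLT
    simpa [star_mul, star_eq_adjoint] using h
  have hTP : adjoint T * P = 0 := by
    ext x
    have hx : P x ∈ LinearMap.ker ((adjoint T : H →L[ℂ] H) : H →ₗ[ℂ] H) := hP3 ▸ LinearMap.mem_range_self (P : H →ₗ[ℂ] H) x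
    simpa [mul_apply_eq_comp] using hx
  have hK : adjoint T * (adjoint (leftInv T) * leftInv T) * T = 1 := by
    rw [show adjoint T * (adjoint (leftInv T) * leftInv T) * T
        = (adjoint T * adjoint (leftInv T)) * (leftInv T * T) by noncomm_ring,
      hTL, hLT, one_mul]
  have hPz : adjoint T * P * T = 0 := by rw [hTP, zero_mul]
  have key : adjoint T * ((adjoint T) ^ 2 * T ^ 2 - (3 : ℂ) • (adjoint T * T)
      + (3 : ℂ) • (1 : H →L[ℂ] H) - adjoint (leftInv T) * leftInv T - P) * T
      = defectOp 3 T := by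
    simp only [mul_sub, sub_mul, mul_add, add_mul, mul_smul_comm, smul_mul_assoc, mul_one]
    rw [hK, hPz]
    simp only [defectOp, Finset.sum_range_succ, Finset.sum_range_zero]
    norm_num
    simp only [pow_succ, pow_zero, one_mul, mul_one, mul_assoc]
    module
  have hpos := hineq.adjoint_conj T
  have e1 : adjoint T ∘L (-((adjoint T) ^ 2 * T ^ 2 - (3 : ℂ) • (adjoint T * T)
      + (3 : ℂ) • (1 : H →L[ℂ] H) - adjoint (leftInv T) * leftInv T - P)) ∘L T
      = -(defectOp 3 T) := by
    rw [← mul_def, ← mul_def, ← mul_assoc, mul_neg, neg_mul, key]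
  rwa [e1] at hpos
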